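/- If I is a maximum critical independent set of G and R is a maximum independent set of the induced subgraph G[L^c(G)], then I ∪ R is a maximum independent set of G. -/

import Mathlib

open Finset

variable {V : Type*} [Fintype V] [DecidableEq V] (G : SimpleGraph V) [DecidableRel G.Adj]

/-- `N(S)`: the set of vertices adjacent to some vertex of `S`. -/
def nbhd (S : Finset V) : Finset V := S.biUnion (fun v => G.neighborFinset v)

/-- `S` is an independent set of `G`. -/
def Indep (S : Finset V) : Prop := ∀ u ∈ S, ∀ v ∈ S, ¬ G.Adj u v

/-- The difference `d_G(S) = |S| - |N(S)|`. -/
def diffI (S : Finset V) : ℤ := (S.card : ℤ) - ((nbhd G S).card : ℤ)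

/-- `S` is a maximum independent set of `G`. -/
def IsMaxIndep (S : Finset V) : Prop :=
  Indep G S ∧ ∀ T : Finset V, Indep G T → T.card ≤ S.card

/-- `I` is a critical independent set of `G`. -/
def IsCritIndep (I : Finset V) : Prop :=
  Indep G I ∧ ∀ J : Finset V, Indep G J → diffI G J ≤ diffI G I

/-- `I` is a maximum critical independent set of `G`. -/
def IsMaxCritIndep (I : Finset V) : Prop :=
  IsCritIndep G I ∧ ∀ J : Finset V, IsCritIndep G J → J.card ≤ I.card

/-- `core(G)`: intersection of all maximum independent sets. -/
def core : Set V := {v | ∀ S : Finset V, IsMaxIndep G S → v ∈ S}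

/-- `corona(G)`: union of all maximum independent sets. -/
def corona : Set V := {v | ∃ S : Finset V, IsMaxIndep G S ∧ v ∈ S}

/-- `nucleus(G)`: intersection of all maximum critical independent sets. -/
def nucleus : Set V := {v | ∀ S : Finset V, IsMaxCritIndep G S → v ∈ S}

/-- `diadem(G)`: union of all maximum critical independent sets. -/
def diadem : Set V := {v | ∃ S : Finset V, IsMaxCritIndep G S ∧ v ∈ S}

/-- `ker(G)`: intersection of all critical independent sets. -/
def kerS : Set V := {v | ∀ S : Finset V, IsCritIndep G S → v ∈ S}

/-- A matching of `G`, given as an involution of the vertex set: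
unmatched vertices are fixed points, matched vertices are sent to their partner. -/
def IsMatching (M : V → V) : Prop :=
  Function.Involutive M ∧ ∀ v, M v ≠ v → G.Adj v (M v)

/-- Twice the number of edges of the matching `M`, i.e. the number of matched vertices. -/
def matchSize (M : V → V) : ℕ := (univ.filter fun v => M v ≠ v).card

/-- `M` is a maximum matching of `G`. -/
def IsMaxMatching (M : V → V) : Prop :=
  IsMatching G M ∧ ∀ M' : V → V, IsMatching G M' → matchSize M' ≤ matchSize M

/-- `M` is a matching of the induced subgraph `G[L]`. -/
def IsMatchingOn (L : Finset V) (M : V → V) : Prop :=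
  IsMatching G M ∧ ∀ v, M v ≠ v → v ∈ L

/-- `M` is a maximum matching of the induced subgraph `G[L]`. -/
def IsMaxMatchingOn (L : Finset V) (M : V → V) : Prop :=
  IsMatchingOn G L M ∧ ∀ M' : V → V, IsMatchingOn G L M' → matchSize M' ≤ matchSize M

/-- `S` is a maximum independent set of the induced subgraph `G[L]`. -/
def IsMaxIndepOn (L : Finset V) (S : Finset V) : Prop :=
  S ⊆ L ∧ Indep G S ∧ ∀ T : Finset V, T ⊆ L → Indep G T → T.card ≤ S.card

/-- `core` of the induced subgraph `G[L]`. -/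
def coreOn (L : Finset V) : Set V := {v | ∀ S : Finset V, IsMaxIndepOn G L S → v ∈ S}

/-- `D(G[L])`: vertices of `L` missed by some maximum matching of `G[L]`. -/
def Dset (L : Finset V) : Set V := {v | v ∈ L ∧ ∃ M : V → V, IsMaxMatchingOn G L M ∧ M v = v}

/-- The Larson boundary `∂_L(G)` of the set `L`. -/
def boundaryL (L : Finset V) : Set V := {v | v ∈ L ∧ ∃ w, w ∉ L ∧ G.Adj v w}

/-- The critical difference `d(G)`. -/
noncomputable def critDiff : ℤ := sSup {d : ℤ | ∃ X : Finset V, diffI G X = d}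

/-- The difference of `S` computed in the induced subgraph `G[L]`. -/
def diffOn (L : Finset V) (S : Finset V) : ℤ := (S.card : ℤ) - ((nbhd G S ∩ L).card : ℤ)

/-- The critical difference of the induced subgraph `G[L]`. -/
noncomputable def critDiffOn (L : Finset V) : ℤ := sSup {d : ℤ | ∃ X : Finset V, X ⊆ L ∧ diffOn G L X = d}

/-- `G` is a König–Egerváry graph: `α(G) + μ(G) = |V(G)|`. -/
def KonigEgervary : Prop :=
  ∃ (S : Finset V) (M : V → V), IsMaxIndep G S ∧ IsMaxMatching G M ∧
    2 * S.card + matchSize M = 2 * Fintype.card V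
section aux
variable {V : Type*} [Fintype V] [DecidableEq V] (G : SimpleGraph V) [DecidableRel G.Adj]

lemma mem_nbhd {S : Finset V} {v : V} : v ∈ nbhd G S ↔ ∃ u ∈ S, G.Adj u v := by
  simp [nbhd]

omit [Fintype V] [DecidableEq V] [DecidableRel G.Adj] in
lemma indep_subset {S T : Finset V} (h : Indep G S) (hTS : T ⊆ S) : Indep G T :=
  fun u hu v hv => h u (hTS hu) v (hTS hv)

/-- Hall condition from criticality. -/
lemma hall_cond {I : Finset V} (hI : IsCritIndep G I) (S : Finset V)
    (hS : S ⊆ nbhd G I) : S.card ≤ (nbhd G S ∩ I).card := by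
  set J : Finset V := I \ nbhd G S with hJ
  have hJind : Indep G J := indep_subset G hI.1 (Finset.sdiff_subset)
  have hd : diffI G J ≤ diffI G I := hI.2 J hJind
  have hc1 : (I ∩ nbhd G S).card + J.card = I.card := Finset.card_inter_add_card_sdiff I (nbhd G S)
  have hsub : nbhd G J ⊆ nbhd G I \ S := by
    intro w hw
    rw [mem_nbhd] at hw
    obtain ⟨u, hu, huw⟩ := hw
    rw [hJ, Finset.mem_sdiff] at hu
    rw [Finset.mem_sdiff]
    refine ⟨(mem_nbhd G).2 ⟨u, hu.1, huw⟩, fun hwS => hu.2 ?_⟩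
    exact (mem_nbhd G).2 ⟨w, hwS, huw.symm⟩
  have hc2 : (nbhd G J).card ≤ (nbhd G I \ S).card := Finset.card_le_card hsub
  have hc3 : (nbhd G I \ S).card + S.card = (nbhd G I).card :=
    Finset.card_sdiff_add_card_eq_card hS
  have hcomm : (nbhd G S ∩ I).card = (I ∩ nbhd G S).card := by rw [Finset.inter_comm]
  unfold diffI at hd
  omega

/-- Any independent subset of `I ∪ N(I)` has size at most `|I|`, for `I` critical independent. -/
lemma indep_in_L_le {I : Finset V} (hI : IsCritIndep G I) (A : Finset V)
    (hAL : A ⊆ I ∪ nbhd G I) (hA : Indep G A) : A.card ≤ I.card := by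
  -- Hall's theorem: injection from N(I) into I along edges
  have hall : ∀ s : Finset {w : V // w ∈ nbhd G I},
      s.card ≤ (s.biUnion (fun w : {w : V // w ∈ nbhd G I} => G.neighborFinset w.1 ∩ I)).card := by
    intro s
    have hbU : s.biUnion (fun w : {w : V // w ∈ nbhd G I} => G.neighborFinset w.1 ∩ I)
        = nbhd G (s.image Subtype.val) ∩ I := by
      ext v
      simp only [Finset.mem_biUnion, Finset.mem_inter, mem_nbhd, Finset.mem_image,
        SimpleGraph.mem_neighborFinset]
      constructor
      · rintro ⟨w, hws, hadj, hvI⟩; exact ⟨⟨w.1, ⟨w, hws, rfl⟩, hadj⟩, hvI⟩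
      · rintro ⟨⟨u, ⟨w, hws, rfl⟩, hadj⟩, hvI⟩; exact ⟨w, hws, hadj, hvI⟩
    rw [hbU]
    have hscard : (s.image Subtype.val).card = s.card :=
      Finset.card_image_of_injective s Subtype.val_injective
    rw [← hscard]
    apply hall_cond G hI
    intro v hv
    obtain ⟨w, _, rfl⟩ := Finset.mem_image.1 hv
    exact w.2
  obtain ⟨f, hfinj, hf⟩ := (Finset.all_card_le_biUnion_card_iff_exists_injective
      (fun w : {w : V // w ∈ nbhd G I} => G.neighborFinset w.1 ∩ I)).1 hall
  -- injection from A \ I into I \ A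
  classical
  have hkey : (A \ I).card ≤ (I \ A).card := by
    apply Finset.card_le_card_of_injOn
      (fun a => if h : a ∈ nbhd G I then f ⟨a, h⟩ else a)
    · intro a ha
      simp only [Finset.mem_coe] at ha ⊢
      rw [Finset.mem_sdiff] at ha
      have haN : a ∈ nbhd G I := by
        rcases Finset.mem_union.1 (hAL ha.1) with h | h
        · exact absurd h ha.2
        · exact h
      rw [dif_pos haN]
      have hfa := hf ⟨a, haN⟩
      rw [Finset.mem_inter, SimpleGraph.mem_neighborFinset] at hfa
      rw [Finset.mem_sdiff]
      refine ⟨hfa.2, fun hmem => ?_⟩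
      exact hA a ha.1 _ hmem hfa.1
    · intro a ha b hb hab
      rw [Finset.mem_coe, Finset.mem_sdiff] at ha hb
      have haN : a ∈ nbhd G I := by
        rcases Finset.mem_union.1 (hAL ha.1) with h | h
        · exact absurd h ha.2
        · exact h
      have hbN : b ∈ nbhd G I := by
        rcases Finset.mem_union.1 (hAL hb.1) with h | h
        · exact absurd h hb.2
        · exact h
      simp only [dif_pos haN, dif_pos hbN] at hab
      exact congrArg Subtype.val (hfinj hab)
  have h1 : (A ∩ I).card + (A \ I).card = A.card := Finset.card_inter_add_card_sdiff A I
  have h2 : (I ∩ A).card + (I \ A).card = I.card := Finset.card_inter_add_card_sdiff I A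
  have h3 : (A ∩ I).card = (I ∩ A).card := by rw [Finset.inter_comm]
  omega

end aux

theorem stmt9 (I R : Finset V) (hI : IsMaxCritIndep G I)
    (hR : IsMaxIndepOn G (univ \ (I ∪ nbhd G I)) R) :
    IsMaxIndep G (I ∪ R) := by
  constructor
  · -- independence
    intro u hu v hv hadj
    have hRL : R ⊆ univ \ (I ∪ nbhd G I) := hR.1
    have hInb : ∀ x ∈ I, ∀ y ∈ R, ¬ G.Adj x y := by
      intro x hx y hy hxy
      have : y ∈ nbhd G I := (mem_nbhd G).2 ⟨x, hx, hxy⟩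
      have := hRL hy
      rw [Finset.mem_sdiff, Finset.mem_union] at this
      exact this.2 (Or.inr ‹y ∈ nbhd G I›)
    rcases Finset.mem_union.1 hu with hu | hu <;> rcases Finset.mem_union.1 hv with hv | hv
    · exact hI.1.1 u hu v hv hadj
    · exact hInb u hu v hv hadj
    · exact hInb v hv u hu hadj.symm
    · exact hR.2.1 u hu v hv hadj
  · -- maximality
    intro T hT
    set L : Finset V := I ∪ nbhd G I with hL
    have h1 : (T ∩ L).card ≤ I.card :=
      indep_in_L_le G hI.1 (T ∩ L) (Finset.inter_subset_right)
        (indep_subset G hT Finset.inter_subset_left)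
    have h2 : (T \ L).card ≤ R.card := by
      apply hR.2.2
      · intro v hv
        rw [Finset.mem_sdiff] at hv ⊢
        exact ⟨Finset.mem_univ v, hv.2⟩
      · exact indep_subset G hT Finset.sdiff_subset
    have h3 : (T ∩ L).card + (T \ L).card = T.card := Finset.card_inter_add_card_sdiff T L
    have h4 : (I ∪ R).card = I.card + R.card := by
      apply Finset.card_union_of_disjoint
      rw [Finset.disjoint_left]
      intro v hvI hvR
      have := hR.1 hvR
      rw [Finset.mem_sdiff, Finset.mem_union] at this
      exact this.2 (Or.inl hvI)
    omega
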